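/- Let Γ1 be a set of formulas and Γ2 = Γ1 ∪ {u_1 = u'_1, ..., u_n = u'_n} for a natural number n. If t !~_{Γ1} u_i and t !~_{Γ1} u'_i for all i = 1, ..., n, then t ≡_{Γ2} t' implies t ≡_{Γ1} t'. -/
import Mathlib


namespace CLKID

/-- Terms of the language: variables, the constant `0`, and the unary function `s`. -/
inductive Tm : Type where
  | var : ℕ → Tm
  | zero : Tm
  | s : Tm → Tm
deriving DecidableEq

/-- `sIter n t` is the term `s^n t`. -/
def sIter : ℕ → Tm → Tm
  | 0, t => t
  | n + 1, t => Tm.s (sIter n t)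

/-- Substitution on terms. -/
def Tm.subst (θ : ℕ → Tm) : Tm → Tm
  | .var x => θ x
  | .zero => .zero
  | .s t => .s (t.subst θ)

/-- Free variables of a term. -/
def Tm.fv : Tm → Set ℕ
  | .var x => {x}
  | .zero => ∅
  | .s t => t.fv

/-- Subterms of a term. -/
def Tm.sub : Tm → Set Tm
  | .var x => {Tm.var x}
  | .zero => {Tm.zero}
  | .s t => insert (Tm.s t) t.sub

/-- The variable of a term (`none` if the term is of the form `s^n 0`). -/
def Tm.varOf : Tm → Option ℕ
  | .var x => some x
  | .zero => none
  | .s t => t.varOf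

/-- Formulas: equations, the two inductive-predicate atoms `Add1`/`Add2`,
    and the usual first-order connectives and quantifiers. -/
inductive Fm : Type where
  | eq : Tm → Tm → Fm
  | add1 : Tm → Tm → Tm → Fm
  | add2 : Tm → Tm → Tm → Fm
  | not : Fm → Fm
  | and : Fm → Fm → Fm
  | or : Fm → Fm → Fm
  | imp : Fm → Fm → Fm
  | all : ℕ → Fm → Fm
  | ex : ℕ → Fm → Fm
deriving DecidableEq

/-- Substitution on formulas. -/
def Fm.subst (θ : ℕ → Tm) : Fm → Fm
  | .eq t u => .eq (t.subst θ) (u.subst θ)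
  | .add1 a b c => .add1 (a.subst θ) (b.subst θ) (c.subst θ)
  | .add2 a b c => .add2 (a.subst θ) (b.subst θ) (c.subst θ)
  | .not φ => .not (φ.subst θ)
  | .and φ ψ => .and (φ.subst θ) (ψ.subst θ)
  | .or φ ψ => .or (φ.subst θ) (ψ.subst θ)
  | .imp φ ψ => .imp (φ.subst θ) (ψ.subst θ)
  | .all x φ => .all x (φ.subst (Function.update θ x (Tm.var x)))
  | .ex x φ => .ex x (φ.subst (Function.update θ x (Tm.var x)))

/-- Free variables of a formula. -/
def Fm.fv : Fm → Set ℕ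
  | .eq t u => t.fv ∪ u.fv
  | .add1 a b c => a.fv ∪ b.fv ∪ c.fv
  | .add2 a b c => a.fv ∪ b.fv ∪ c.fv
  | .not φ => φ.fv
  | .and φ ψ => φ.fv ∪ ψ.fv
  | .or φ ψ => φ.fv ∪ ψ.fv
  | .imp φ ψ => φ.fv ∪ ψ.fv
  | .all x φ => φ.fv \ {x}
  | .ex x φ => φ.fv \ {x}

/-- Terms occurring in a formula. -/
def Fm.tms : Fm → Set Tm
  | .eq t u => t.sub ∪ u.sub
  | .add1 a b c => a.sub ∪ b.sub ∪ c.sub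
  | .add2 a b c => a.sub ∪ b.sub ∪ c.sub
  | .not φ => φ.tms
  | .and φ ψ => φ.tms ∪ ψ.tms
  | .or φ ψ => φ.tms ∪ ψ.tms
  | .imp φ ψ => φ.tms ∪ ψ.tms
  | .all _ φ => φ.tms
  | .ex _ φ => φ.tms

/-- The substitution `[x := t]`. -/
def sub1 (x : ℕ) (t : Tm) : ℕ → Tm := fun y => if y = x then t else Tm.var y

/-- The simultaneous substitution `[v1 := t, v2 := u]`. -/
def sub2 (v1 v2 : ℕ) (t u : Tm) : ℕ → Tm :=
  fun z => if z = v1 then t else if z = v2 then u else Tm.var z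

/-- `≡_Γ`: the smallest congruence relation on terms containing all pairs `(t, u)`
    with the equation `t = u` in `Γ`. -/
inductive EqvTm (Γ : Set Fm) : Tm → Tm → Prop where
  | base {t u : Tm} : Fm.eq t u ∈ Γ → EqvTm Γ t u
  | refl (t : Tm) : EqvTm Γ t t
  | symm {t u : Tm} : EqvTm Γ t u → EqvTm Γ u t
  | trans {t u v : Tm} : EqvTm Γ t u → EqvTm Γ u v → EqvTm Γ t v
  | sCongr {t u : Tm} : EqvTm Γ t u → EqvTm Γ (Tm.s t) (Tm.s u)

/-- `t ~_Γ u` : `s^n t ≡_Γ s^m u` for some naturals `n`, `m`. -/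
def DepTm (Γ : Set Fm) (t u : Tm) : Prop := ∃ n m : ℕ, EqvTm Γ (sIter n t) (sIter m u)

/-- A sequent: a pair of finite sets of formulas. -/
structure Seq where
  ant : Finset Fm
  suc : Finset Fm

/-- The antecedent of a sequent, as a set of formulas. -/
def antSet (S : Seq) : Set Fm := ↑S.ant

/-- `[Γ]` from Lemma on chains: `{ s^n t1 = s^n t2 | t1 = t2 ∈ Γ or t2 = t1 ∈ Γ }`. -/
def brkt (Γ : Set Fm) : Set Fm :=
  {φ | ∃ (n : ℕ) (t1 t2 : Tm), φ = Fm.eq (sIter n t1) (sIter n t2) ∧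
        (Fm.eq t1 t2 ∈ Γ ∨ Fm.eq t2 t1 ∈ Γ)}

/-- `B1(Γ ⊢ Δ)` : second arguments of `Add1` atoms in the consequent. -/
def B1 (S : Seq) : Set Tm := {b | ∃ a c, Fm.add1 a b c ∈ S.suc}

/-- `C(Γ ⊢ Δ)` : third arguments of `Add2` atoms in the antecedent
    or `Add1` atoms in the consequent. -/
def Cset (S : Seq) : Set Tm :=
  {c | (∃ a b, Fm.add2 a b c ∈ S.ant) ∨ (∃ a b, Fm.add1 a b c ∈ S.suc)}

/-- Index sequent. -/
def IndexSequent (S : Seq) : Prop :=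
  (∀ t ∈ B1 S, ∀ u ∈ Cset S, ¬ DepTm (antSet S) t u) ∧
  (∀ b ∈ B1 S, ∀ b' ∈ B1 S, ∀ n m : ℕ, EqvTm (antSet S) (sIter n b) (sIter m b') → n = m)

lemma sIter_s (n : ℕ) (a : Tm) : sIter n (Tm.s a) = Tm.s (sIter n a) := by
  induction n with
  | zero => rfl
  | succ k ih => simp [sIter, ih]

lemma eqvTm_sIter {Γ : Set Fm} {a b : Tm} (h : EqvTm Γ a b) (n : ℕ) :
    EqvTm Γ (sIter n a) (sIter n b) := by
  induction n with
  | zero => exact h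
  | succ k ih => exact EqvTm.sCongr ih

lemma depTm_of_eqv {Γ : Set Fm} {a b v : Tm} (h : EqvTm Γ a b) (hd : DepTm Γ b v) :
    DepTm Γ a v := by
  obtain ⟨p, q, hpq⟩ := hd
  exact ⟨p, q, EqvTm.trans (eqvTm_sIter h p) hpq⟩

lemma depTm_s {Γ : Set Fm} {a v : Tm} (hd : DepTm Γ a v) : DepTm Γ (Tm.s a) v := by
  obtain ⟨p, q, hpq⟩ := hd
  exact ⟨p, q + 1, by rw [sIter_s]; exact EqvTm.sCongr hpq⟩

/-- If `t` is `~_{Γ1}`-unrelated to all `u_i` and `u'_i`, then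
    adding the equations `u_i = u'_i` does not change `≡`-equalities from `t`. -/
theorem eqv_left_asp (Γ1 : Set Fm) (n : ℕ) (u u' : ℕ → Tm) (t t' : Tm)
    (hu : ∀ i, i < n → ¬ DepTm Γ1 t (u i) ∧ ¬ DepTm Γ1 t (u' i))
    (h : EqvTm (Γ1 ∪ {φ | ∃ i, i < n ∧ φ = Fm.eq (u i) (u' i)}) t t') :
    EqvTm Γ1 t t' := by
  set Bad : Tm → Prop := fun x => ∃ i, i < n ∧ (DepTm Γ1 x (u i) ∨ DepTm Γ1 x (u' i))
    with hBad
  have key : ∀ a b, EqvTm (Γ1 ∪ {φ | ∃ i, i < n ∧ φ = Fm.eq (u i) (u' i)}) a b →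
      EqvTm Γ1 a b ∨ (Bad a ∧ Bad b) := by
    intro a b hab
    induction hab with
    | @base a b hmem =>
      rcases hmem with hmem | hmem
      · exact Or.inl (EqvTm.base hmem)
      · obtain ⟨i, hi, heq⟩ := hmem
        cases heq
        refine Or.inr ⟨⟨i, hi, Or.inl ⟨0, 0, EqvTm.refl _⟩⟩,
          ⟨i, hi, Or.inr ⟨0, 0, EqvTm.refl _⟩⟩⟩
    | refl t => exact Or.inl (EqvTm.refl t)
    | symm _ ih => rcases ih with h | ⟨h1, h2⟩
                   · exact Or.inl (EqvTm.symm h)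
                   · exact Or.inr ⟨h2, h1⟩
    | @trans a b c _ _ ih1 ih2 =>
      rcases ih1 with h1 | ⟨hb1, hb2⟩
      · rcases ih2 with h2 | ⟨hb2, hb3⟩
        · exact Or.inl (EqvTm.trans h1 h2)
        · refine Or.inr ⟨?_, hb3⟩
          obtain ⟨i, hi, hd⟩ := hb2
          exact ⟨i, hi, hd.imp (depTm_of_eqv h1) (depTm_of_eqv h1)⟩
      · rcases ih2 with h2 | ⟨hb2', hb3⟩
        · refine Or.inr ⟨hb1, ?_⟩
          obtain ⟨i, hi, hd⟩ := hb2
          exact ⟨i, hi, hd.imp (depTm_of_eqv (EqvTm.symm h2)) (depTm_of_eqv (EqvTm.symm h2))⟩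
        · exact Or.inr ⟨hb1, hb3⟩
    | sCongr _ ih =>
      rcases ih with h | ⟨h1, h2⟩
      · exact Or.inl (EqvTm.sCongr h)
      · obtain ⟨i, hi, hd1⟩ := h1
        obtain ⟨j, hj, hd2⟩ := h2
        exact Or.inr ⟨⟨i, hi, hd1.imp depTm_s depTm_s⟩, ⟨j, hj, hd2.imp depTm_s depTm_s⟩⟩
  rcases key t t' h with h | ⟨⟨i, hi, hd⟩, _⟩
  · exact h
  · rcases hd with hd | hd
    · exact absurd hd (hu i hi).1
    · exact absurd hd (hu i hi).2

end CLKID
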